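/- Let 0 < σ < n/2 and λ > 0. Define G(λ; ξ, z) = |ξ − z|^{2σ−n} − (λ/|ξ|)^{n−2σ}·|ξ^λ − z|^{2σ−n}, where ξ^λ = λ²ξ/|ξ|². Then G(λ; ξ, z) > 0 for all ξ, z with |ξ| > λ, |z| > λ and ξ ≠ z. -/

import Mathlib

theorem stmt_3 (n : ℕ) (σ lam : ℝ) (hσ : 0 < σ) (hn : 2 * σ < n) (hlam : 0 < lam)
    (ξ z : EuclideanSpace ℝ (Fin n)) (hξ : lam < ‖ξ‖) (hz : lam < ‖z‖) (hne : ξ ≠ z) :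
    0 < ‖ξ - z‖ ^ (2 * σ - (n : ℝ))
        - (lam / ‖ξ‖) ^ ((n : ℝ) - 2 * σ) * ‖(lam ^ 2 / ‖ξ‖ ^ 2) • ξ - z‖ ^ (2 * σ - (n : ℝ)) := by
  set X := ‖ξ‖ with hX
  set Z := ‖z‖ with hZ
  have hX0 : 0 < X := lt_trans hlam hξ
  have ha : 0 < ‖ξ - z‖ := by
    rw [norm_pos_iff]; exact sub_ne_zero_of_ne hne
  set t : ℝ := inner ℝ ξ z with ht
  set w := (lam ^ 2 / ‖ξ‖ ^ 2) • ξ - z with hw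
  have hnormsub : ‖ξ - z‖ ^ 2 = X ^ 2 - 2 * t + Z ^ 2 := by
    rw [@norm_sub_sq_real]
  have hwsq : ‖w‖ ^ 2 = (lam ^ 2 / X ^ 2) ^ 2 * X ^ 2 - 2 * (lam ^ 2 / X ^ 2) * t + Z ^ 2 := by
    rw [hw, @norm_sub_sq_real, norm_smul, real_inner_smul_left, Real.norm_eq_abs,
      abs_of_pos (div_pos (pow_pos hlam 2) (pow_pos hX0 2))]
    ring
  -- key inequality on norms
  have hkey : ‖ξ - z‖ < (X / lam) * ‖w‖ := by
    have hwpos : 0 ≤ (X / lam) * ‖w‖ := by positivity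
    refine lt_of_pow_lt_pow_left₀ 2 hwpos ?_
    have : ((X / lam) * ‖w‖) ^ 2 = (X / lam) ^ 2 * ‖w‖ ^ 2 := by ring
    rw [this, hwsq, hnormsub]
    have h1 : lam ^ 2 < X ^ 2 := by nlinarith
    have h2 : lam ^ 2 < Z ^ 2 := by nlinarith
    have hXne : X ^ 2 ≠ 0 := by positivity
    have hlne : lam ^ 2 ≠ 0 := by positivity
    have expand : (X / lam) ^ 2 * ((lam ^ 2 / X ^ 2) ^ 2 * X ^ 2 - 2 * (lam ^ 2 / X ^ 2) * t + Z ^ 2)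
        = lam ^ 2 - 2 * t + X ^ 2 * Z ^ 2 / lam ^ 2 := by
      field_simp
    rw [expand]
    have : X ^ 2 * Z ^ 2 / lam ^ 2 - X ^ 2 - Z ^ 2 + lam ^ 2
        = (X ^ 2 - lam ^ 2) * (Z ^ 2 - lam ^ 2) / lam ^ 2 := by
      field_simp; ring
    nlinarith [mul_pos (sub_pos.mpr h1) (sub_pos.mpr h2),
      div_pos (mul_pos (sub_pos.mpr h1) (sub_pos.mpr h2)) (pow_pos hlam 2)]
  have hwn : 0 < ‖w‖ := by
    by_contra h
    push_neg at h
    have : ‖w‖ = 0 := le_antisymm h (norm_nonneg _)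
    rw [this, mul_zero] at hkey
    linarith
  have hc : 2 * σ - (n : ℝ) < 0 := by linarith
  have hmain : ((X / lam) * ‖w‖) ^ (2 * σ - (n : ℝ)) < ‖ξ - z‖ ^ (2 * σ - (n : ℝ)) :=
    Real.rpow_lt_rpow_of_neg ha hkey hc
  have hrw : ((X / lam) * ‖w‖) ^ (2 * σ - (n : ℝ))
      = (lam / X) ^ ((n : ℝ) - 2 * σ) * ‖w‖ ^ (2 * σ - (n : ℝ)) := by
    rw [Real.mul_rpow (by positivity) (norm_nonneg _)]
    congr 1
    rw [show (2 * σ - (n : ℝ)) = -((n : ℝ) - 2 * σ) by ring, Real.rpow_neg (by positivity),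
      ← Real.inv_rpow (by positivity)]
    congr 1
    field_simp
  rw [hrw] at hmain
  linarith
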